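/- For every integer l ≥ 1, in the Loewner order on bounded self-adjoint operators on H₀ × H₀: Σ_M(l) ≤ Σ_R(1/(l+1)) ≤ max{(2l+1)/(l+1), (l+1)/l}·Σ_M(l); moreover Σ_M(l) ≤ ((l²+l+2+(l−1)√((l+1)²+1))/(2(l+1)))·Σ_D and Σ_D ≤ ((l²+l+2+(l−1)√((l+1)²+1))/(l+1)²)·Σ_M(l). -/

import Mathlib

open scoped RealInnerProductSpace

/-- Quadratic form of the block operator `[[d•I + a•T², b•T], [b•T, c•I]]` on `H₀ × H₀`
(with the product inner product), evaluated at the vector `(f, g)`. -/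
noncomputable def blockQuadForm {H₀ : Type*} [NormedAddCommGroup H₀] [InnerProductSpace ℝ H₀]
    (T : H₀ →L[ℝ] H₀) (a b c d : ℝ) (f g : H₀) : ℝ :=
  ⟪f, d • f + a • T (T f) + b • T g⟫ + ⟪g, b • T f + c • g⟫

/-- Quadratic form of `Σ_D = [[2I + 4T², 2T], [2T, 2I]]`. -/
noncomputable def sigmaD {H₀ : Type*} [NormedAddCommGroup H₀] [InnerProductSpace ℝ H₀]
    (T : H₀ →L[ℝ] H₀) (f g : H₀) : ℝ :=
  blockQuadForm T 4 2 2 2 f g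

/-- Quadratic form of
`Σ_R(r) = [[((2−r)/r)I + (2/(r(1−r)))T², (2/(1−r))T], [(2/(1−r))T, ((1+r)/(1−r))I]]`. -/
noncomputable def sigmaR {H₀ : Type*} [NormedAddCommGroup H₀] [InnerProductSpace ℝ H₀]
    (T : H₀ →L[ℝ] H₀) (r : ℝ) (f g : H₀) : ℝ :=
  blockQuadForm T (2 / (r * (1 - r))) (2 / (1 - r)) ((1 + r) / (1 - r)) ((2 - r) / r) f g

/-- Quadratic form of `Σ_M(l) = [[(l+1)I + 2(l+1)T², 2T], [2T, ((l+3)/(l+1))I]]`. -/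
noncomputable def sigmaM {H₀ : Type*} [NormedAddCommGroup H₀] [InnerProductSpace ℝ H₀]
    (T : H₀ →L[ℝ] H₀) (l : ℕ) (f g : H₀) : ℝ :=
  blockQuadForm T (2 * ((l : ℝ) + 1)) 2 (((l : ℝ) + 3) / ((l : ℝ) + 1)) ((l : ℝ) + 1) f g

section Helpers

variable {H₀ : Type*} [NormedAddCommGroup H₀] [InnerProductSpace ℝ H₀] [CompleteSpace H₀]
variable {T : H₀ →L[ℝ] H₀}

private lemma scalar_nonneg (a b c d x y z w : ℝ) (hx : 0 ≤ x) (hy : 0 ≤ y) (hw : 0 ≤ w)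
    (hz : z ^ 2 ≤ y * w) (ha : 0 ≤ a) (hc : 0 ≤ c) (hd : 0 ≤ d) (hb : b ^ 2 ≤ a * c) :
    0 ≤ d * x + a * y + 2 * b * z + c * w := by
  have h1 : (2 * b * z) ^ 2 ≤ (a * y + c * w) ^ 2 := by
    nlinarith [mul_le_mul_of_nonneg_left hz (sq_nonneg b),
      mul_le_mul_of_nonneg_right hb (mul_nonneg hy hw), sq_nonneg (a * y - c * w)]
  have h2 : 0 ≤ a * y + c * w := by
    have := mul_nonneg ha hy; have := mul_nonneg hc hw; linarith
  have h3 : -(a * y + c * w) ≤ 2 * b * z := by nlinarith [h1, h2]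
  nlinarith [mul_nonneg hd hx]

private lemma blockQF_eq (hT : IsSelfAdjoint T) (a b c d : ℝ) (f g : H₀) :
    blockQuadForm T a b c d f g =
      d * ‖f‖ ^ 2 + a * ‖T f‖ ^ 2 + 2 * b * ⟪T f, g⟫ + c * ‖g‖ ^ 2 := by
  have hsym : ∀ x y : H₀, (⟪T x, y⟫ : ℝ) = ⟪x, T y⟫ := fun x y =>
    (ContinuousLinearMap.isSelfAdjoint_iff_isSymmetric.mp hT) x y
  have h1 : (⟪f, T (T f)⟫ : ℝ) = ‖T f‖ ^ 2 := by
    rw [← hsym f (T f)]; simp [real_inner_self_eq_norm_sq]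
  have h2 : (⟪f, T g⟫ : ℝ) = ⟪T f, g⟫ := (hsym f g).symm
  have h3 : (⟪g, T f⟫ : ℝ) = ⟪T f, g⟫ := real_inner_comm _ _
  unfold blockQuadForm
  simp only [inner_add_right, real_inner_smul_right, h1, h2, h3, real_inner_self_eq_norm_sq]
  ring

private lemma quad_le_mul (hT : IsSelfAdjoint T) (m a₁ b₁ c₁ d₁ a₂ b₂ c₂ d₂ : ℝ)
    (ha : 0 ≤ m * a₂ - a₁) (hc : 0 ≤ m * c₂ - c₁) (hd : 0 ≤ m * d₂ - d₁)
    (hb : (m * b₂ - b₁) ^ 2 ≤ (m * a₂ - a₁) * (m * c₂ - c₁)) (f g : H₀) :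
    blockQuadForm T a₁ b₁ c₁ d₁ f g ≤ m * blockQuadForm T a₂ b₂ c₂ d₂ f g := by
  rw [blockQF_eq hT, blockQF_eq hT]
  have hz : (⟪T f, g⟫ : ℝ) ^ 2 ≤ ‖T f‖ ^ 2 * ‖g‖ ^ 2 := by
    have := real_inner_mul_inner_self_le (T f) g
    rw [real_inner_self_eq_norm_sq, real_inner_self_eq_norm_sq] at this
    nlinarith [this]
  have key := scalar_nonneg (m * a₂ - a₁) (m * b₂ - b₁) (m * c₂ - c₁) (m * d₂ - d₁)
    (‖f‖ ^ 2) (‖T f‖ ^ 2) (⟪T f, g⟫) (‖g‖ ^ 2)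
    (sq_nonneg _) (sq_nonneg _) (sq_nonneg _) hz ha hc hd hb
  nlinarith [key]

private lemma ineq1 (hT : IsSelfAdjoint T) (n : ℝ) (hn : 1 ≤ n) (f g : H₀) :
    blockQuadForm T (2 * (n + 1)) 2 ((n + 3) / (n + 1)) (n + 1) f g ≤
      blockQuadForm T (2 / (1 / (n + 1) * (1 - 1 / (n + 1)))) (2 / (1 - 1 / (n + 1)))
        ((1 + 1 / (n + 1)) / (1 - 1 / (n + 1))) ((2 - 1 / (n + 1)) / (1 / (n + 1))) f g := by
  have hn0 : (0:ℝ) < n := by linarith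
  have hn1 : (0:ℝ) < n + 1 := by linarith
  have hn0' : n ≠ 0 := ne_of_gt hn0
  have hn1' : n + 1 ≠ 0 := ne_of_gt hn1
  have e_a : 2 / (1 / (n + 1) * (1 - 1 / (n + 1))) = 2 * (n + 1) + 2 * (n + 1) / n := by
    field_simp; ring_nf; field_simp
  have e_b : 2 / (1 - 1 / (n + 1)) = 2 + 2 / n := by field_simp; ring_nf; field_simp
  have e_c : (1 + 1 / (n + 1)) / (1 - 1 / (n + 1)) = (n + 3) / (n + 1) + 2 / (n * (n + 1)) := by
    field_simp; ring_nf; field_simp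
  have e_d : (2 - 1 / (n + 1)) / (1 / (n + 1)) = (n + 1) + n := by field_simp; ring
  calc blockQuadForm T (2 * (n + 1)) 2 ((n + 3) / (n + 1)) (n + 1) f g
      ≤ 1 * blockQuadForm T (2 / (1 / (n + 1) * (1 - 1 / (n + 1)))) (2 / (1 - 1 / (n + 1)))
        ((1 + 1 / (n + 1)) / (1 - 1 / (n + 1))) ((2 - 1 / (n + 1)) / (1 / (n + 1))) f g := by
        apply quad_le_mul hT
        · rw [one_mul, e_a]
          have : 0 ≤ 2 * (n + 1) / n := div_nonneg (by linarith) hn0.le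
          linarith
        · rw [one_mul, e_c]
          have : 0 ≤ 2 / (n * (n + 1)) := div_nonneg (by norm_num) (by positivity)
          linarith
        · rw [one_mul, e_d]; linarith
        · rw [one_mul, one_mul, one_mul, e_a, e_b, e_c]
          apply le_of_eq
          field_simp
          ring
    _ = _ := one_mul _

private lemma ineq2 (hT : IsSelfAdjoint T) (n : ℝ) (hn : 1 ≤ n) (f g : H₀) :
    blockQuadForm T (2 / (1 / (n + 1) * (1 - 1 / (n + 1)))) (2 / (1 - 1 / (n + 1)))
        ((1 + 1 / (n + 1)) / (1 - 1 / (n + 1))) ((2 - 1 / (n + 1)) / (1 / (n + 1))) f g ≤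
      max ((2 * n + 1) / (n + 1)) ((n + 1) / n) *
        blockQuadForm T (2 * (n + 1)) 2 ((n + 3) / (n + 1)) (n + 1) f g := by
  have hn0 : (0:ℝ) < n := by linarith
  have hn1 : (0:ℝ) < n + 1 := by linarith
  have hn0' : n ≠ 0 := ne_of_gt hn0
  have hn1' : n + 1 ≠ 0 := ne_of_gt hn1
  set m := max ((2 * n + 1) / (n + 1)) ((n + 1) / n) with hm
  have hP : n + 1 ≤ m * n := (div_le_iff₀ hn0).mp (le_max_right _ _)
  have hQ : 2 * n + 1 ≤ m * (n + 1) := (div_le_iff₀ hn1).mp (le_max_left _ _)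
  have hP0 : 0 ≤ m * n - (n + 1) := by linarith
  have e_a : 2 / (1 / (n + 1) * (1 - 1 / (n + 1))) = 2 * (n + 1) + 2 * (n + 1) / n := by
    field_simp; ring_nf; field_simp
  have e_b : 2 / (1 - 1 / (n + 1)) = 2 + 2 / n := by field_simp; ring_nf; field_simp
  have e_c : (1 + 1 / (n + 1)) / (1 - 1 / (n + 1)) = (n + 3) / (n + 1) + 2 / (n * (n + 1)) := by
    field_simp; ring_nf; field_simp
  have e_d : (2 - 1 / (n + 1)) / (1 / (n + 1)) = (n + 1) + n := by field_simp; ring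
  have ea2 : m * (2 * (n + 1)) - (2 * (n + 1) + 2 * (n + 1) / n)
      = 2 * (n + 1) * (m * n - (n + 1)) / n := by field_simp
  have eb2 : m * 2 - (2 + 2 / n) = 2 * (m * n - (n + 1)) / n := by field_simp
  have ec2 : m * ((n + 3) / (n + 1)) - ((n + 3) / (n + 1) + 2 / (n * (n + 1)))
      = ((n + 3) * (m * n - (n + 1)) + (n + 1)) / (n * (n + 1)) := by field_simp; ring
  apply quad_le_mul hT
  · rw [e_a, ea2]
    exact div_nonneg (by nlinarith) hn0.le
  · rw [e_c, ec2]
    exact div_nonneg (by nlinarith) (by positivity)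
  · rw [e_d]; linarith
  · rw [e_a, e_b, e_c, ea2, eb2, ec2]
    rw [div_pow, div_mul_div_comm, div_le_div_iff₀ (by positivity) (by positivity)]
    nlinarith [mul_nonneg (add_nonneg (sq_nonneg (m * n - (n + 1))) hP0)
      (sq_nonneg (n * (n + 1))), hn0, hn1]

private lemma ineq3 (hT : IsSelfAdjoint T) (n : ℝ) (hn : 1 ≤ n) (f g : H₀) :
    blockQuadForm T (2 * (n + 1)) 2 ((n + 3) / (n + 1)) (n + 1) f g ≤
      ((n ^ 2 + n + 2 + (n - 1) * Real.sqrt ((n + 1) ^ 2 + 1)) / (2 * (n + 1))) *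
        blockQuadForm T 4 2 2 2 f g := by
  have hn1 : (0:ℝ) < n + 1 := by linarith
  have hn1' : n + 1 ≠ 0 := ne_of_gt hn1
  set s := Real.sqrt ((n + 1) ^ 2 + 1) with hs
  have hs2 : s ^ 2 = (n + 1) ^ 2 + 1 := Real.sq_sqrt (by positivity)
  have hs0 : 0 ≤ s := Real.sqrt_nonneg _
  have hs_ge : n + 1 ≤ s := by nlinarith [hs2, hs0]
  set k := (n ^ 2 + n + 2 + (n - 1) * s) / (2 * (n + 1)) with hk
  have e_a : k * 4 - 2 * (n + 1) = 2 * ((n - 1) * (s - 1)) / (n + 1) := by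
    rw [hk]; field_simp; ring
  have e_b : k * 2 - 2 = (n - 1) * (n + s) / (n + 1) := by
    rw [hk]; field_simp; ring
  have e_c : k * 2 - (n + 3) / (n + 1) = (n - 1) * (n + 1 + s) / (n + 1) := by
    rw [hk]; field_simp; ring
  have e_d : k * 2 - (n + 1) = (n - 1) * (s - 1) / (n + 1) := by
    rw [hk]; field_simp; ring
  apply quad_le_mul hT
  · rw [e_a]; exact div_nonneg (by nlinarith) hn1.le
  · rw [e_c]; exact div_nonneg (by nlinarith) hn1.le
  · rw [e_d]; exact div_nonneg (by nlinarith) hn1.le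
  · rw [e_a, e_b, e_c]
    apply le_of_eq
    rw [div_pow, div_mul_div_comm,
      div_eq_div_iff (pow_pos hn1 2).ne' (mul_pos hn1 hn1).ne']
    linear_combination (-(n - 1) ^ 2 * (n + 1) ^ 2) * hs2

private lemma ineq4 (hT : IsSelfAdjoint T) (n : ℝ) (hn : 1 ≤ n) (f g : H₀) :
    blockQuadForm T 4 2 2 2 f g ≤
      ((n ^ 2 + n + 2 + (n - 1) * Real.sqrt ((n + 1) ^ 2 + 1)) / ((n + 1) ^ 2)) *
        blockQuadForm T (2 * (n + 1)) 2 ((n + 3) / (n + 1)) (n + 1) f g := by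
  have hn1 : (0:ℝ) < n + 1 := by linarith
  have hn1' : n + 1 ≠ 0 := ne_of_gt hn1
  set s := Real.sqrt ((n + 1) ^ 2 + 1) with hs
  have hs2 : s ^ 2 = (n + 1) ^ 2 + 1 := Real.sq_sqrt (by positivity)
  have hs0 : 0 ≤ s := Real.sqrt_nonneg _
  have hs_ge : n + 1 ≤ s := by nlinarith [hs2, hs0]
  set k := (n ^ 2 + n + 2 + (n - 1) * s) / ((n + 1) ^ 2) with hk
  have e_a : k * (2 * (n + 1)) - 4 = 2 * ((n - 1) * (n + s)) / (n + 1) := by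
    rw [hk]; field_simp; ring
  have e_b : k * 2 - 2 = 2 * ((n - 1) * (s - 1)) / (n + 1) ^ 2 := by
    rw [hk]; field_simp; ring
  have e_c : k * ((n + 3) / (n + 1)) - 2
      = (n - 1) * ((n + 3) * s - (n ^ 2 + 3 * n + 4)) / (n + 1) ^ 3 := by
    rw [hk]; field_simp; ring
  have e_d : k * (n + 1) - 2 = (n - 1) * (n + s) / (n + 1) := by
    rw [hk]; field_simp; ring
  have hnum : 0 ≤ (n + 3) * s - (n ^ 2 + 3 * n + 4) := by nlinarith [hs_ge]
  apply quad_le_mul hT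
  · rw [e_a]; exact div_nonneg (by nlinarith) hn1.le
  · rw [e_c]; exact div_nonneg (by nlinarith) (by positivity)
  · rw [e_d]; exact div_nonneg (by nlinarith) hn1.le
  · rw [e_a, e_b, e_c]
    apply le_of_eq
    rw [div_pow, div_mul_div_comm,
      div_eq_div_iff (pow_pos (pow_pos hn1 2) 2).ne' (mul_pos hn1 (pow_pos hn1 3)).ne']
    linear_combination (-(2 * n + 2) * (n - 1) ^ 2 * (n + 1) ^ 4) * hs2

end Helpers

theorem stmt8 {H₀ : Type*} [NormedAddCommGroup H₀] [InnerProductSpace ℝ H₀] [CompleteSpace H₀]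
    (T : H₀ →L[ℝ] H₀) (hT : IsSelfAdjoint T)
    (l : ℕ) (hl : 1 ≤ l) :
    (∀ f g : H₀, sigmaM T l f g ≤ sigmaR T (1 / ((l : ℝ) + 1)) f g) ∧
    (∀ f g : H₀, sigmaR T (1 / ((l : ℝ) + 1)) f g ≤
      max ((2 * (l : ℝ) + 1) / ((l : ℝ) + 1)) (((l : ℝ) + 1) / (l : ℝ)) * sigmaM T l f g) ∧
    (∀ f g : H₀, sigmaM T l f g ≤
      (((l : ℝ) ^ 2 + (l : ℝ) + 2 + ((l : ℝ) - 1) * Real.sqrt (((l : ℝ) + 1) ^ 2 + 1)) /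
        (2 * ((l : ℝ) + 1))) * sigmaD T f g) ∧
    (∀ f g : H₀, sigmaD T f g ≤
      (((l : ℝ) ^ 2 + (l : ℝ) + 2 + ((l : ℝ) - 1) * Real.sqrt (((l : ℝ) + 1) ^ 2 + 1)) /
        (((l : ℝ) + 1) ^ 2)) * sigmaM T l f g) := by
  have hn : (1:ℝ) ≤ (l : ℝ) := by exact_mod_cast hl
  exact ⟨fun f g => ineq1 hT (l : ℝ) hn f g,
    fun f g => ineq2 hT (l : ℝ) hn f g,
    fun f g => ineq3 hT (l : ℝ) hn f g,
    fun f g => ineq4 hT (l : ℝ) hn f g⟩
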